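/- Let p be an odd prime, q a prime power with p ∤ q, ρ = ord_p(q), β = ν_p(q^ρ - 1), and n = p^α. For each integer j with 1 ≤ j ≤ α - β, the number of monic irreducible factors of x^n - 1 over F_q of degree ρ·p^j equals (p^β - p^{β-1})/ρ = φ(p^β)/ρ. -/

import Mathlib

open Polynomial UniqueFactorizationMonoid
open scoped Classical

open IntermediateField

lemma zmod_pow_eq_one_iff (q m e : ℕ) (hq : 2 ≤ q) [NeZero m] :
    (q : ZMod m) ^ e = 1 ↔ m ∣ q ^ e - 1 := by
  have h1 : 1 ≤ q ^ e := Nat.one_le_pow _ _ (by omega)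
  rw [← ZMod.natCast_eq_zero_iff]
  have : ((q ^ e - 1 : ℕ) : ZMod m) = (q : ZMod m) ^ e - 1 := by
    push_cast [Nat.cast_sub h1]; ring
  rw [this, sub_eq_zero]

lemma minpoly_deg_eq {F K : Type*} [Field F] [Fintype F] [Field K] [Algebra F K]
    (z : K) (hz : IsOfFinOrder z) (hint : IsIntegral F z) :
    (minpoly F z).natDegree = orderOf ((Fintype.card F : ZMod (orderOf z))) := by
  classical
  set q := Fintype.card F with hqdef
  set m := orderOf z with hmdef
  haveI : NeZero m := ⟨hz.orderOf_pos.ne'⟩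
  set d := (minpoly F z).natDegree with hddef
  have hq : 2 ≤ q := Fintype.one_lt_card
  have hdpos : 0 < d := minpoly.natDegree_pos hint
  have hz0 : z ≠ 0 := hz.isUnit.ne_zero
  -- z ^ q ^ e = z ↔ relations
  have hcancel : ∀ e : ℕ, z ^ (q ^ e - 1) = 1 → z ^ q ^ e = z := by
    intro e h
    have h1 : 1 ≤ q ^ e := Nat.one_le_pow _ _ (by omega)
    have h2 : z ^ q ^ e = z ^ (q ^ e - 1) * z := by
      rw [← pow_succ, Nat.sub_add_cancel h1]
    rw [h2, h, one_mul]
  haveI : FiniteDimensional F F⟮z⟯ := IntermediateField.adjoin.finiteDimensional hint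
  haveI : Finite F⟮z⟯ := Module.finite_of_finite F
  haveI : Fintype F⟮z⟯ := Fintype.ofFinite _
  have hcard : Fintype.card F⟮z⟯ = q ^ d := by
    rw [Module.card_eq_pow_finrank (K := F), IntermediateField.adjoin.finrank hint]
  -- direction 1 : z ^ q ^ d = z
  have hzd : z ^ q ^ d = z := by
    have := FiniteField.pow_card (IntermediateField.AdjoinSimple.gen F z)
    rw [hcard] at this
    have := congrArg (fun x : F⟮z⟯ => (x : K)) this
    simpa using this
  have hz1 : z ^ (q ^ d - 1) = 1 := by
    have h1 : 1 ≤ q ^ d := Nat.one_le_pow _ _ (by omega)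
    have : z ^ (q ^ d - 1) * z = 1 * z := by
      rw [← pow_succ, Nat.sub_add_cancel h1, hzd, one_mul]
    exact mul_right_cancel₀ hz0 this
  have hmd : m ∣ q ^ d - 1 := orderOf_dvd_of_pow_eq_one hz1
  have hpow_d : (q : ZMod m) ^ d = 1 := (zmod_pow_eq_one_iff q m d hq).mpr hmd
  have hfin : IsOfFinOrder ((q : ZMod m)) :=
    isOfFinOrder_iff_pow_eq_one.mpr ⟨d, hdpos, hpow_d⟩
  set o := orderOf ((q : ZMod m)) with hodef
  have hopos : 0 < o := hfin.orderOf_pos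
  have ho_dvd_d : o ∣ d := orderOf_dvd_of_pow_eq_one hpow_d
  -- direction 2
  have hmo : m ∣ q ^ o - 1 := (zmod_pow_eq_one_iff q m o hq).mp (pow_orderOf_eq_one _)
  have hzo : z ^ q ^ o = z := hcancel o (orderOf_dvd_iff_pow_eq_one.mp hmo)
  -- all elements of F⟮z⟯ are fixed by x ↦ x ^ q ^ o
  obtain ⟨k, hrprime, hqr⟩ := FiniteField.card F (ringChar F)
  haveI : Fact (Nat.Prime (ringChar F)) := ⟨hrprime⟩
  haveI : CharP K (ringChar F) :=
    charP_of_injective_algebraMap (algebraMap F K).injective (ringChar F)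
  have hpowsplit : ∀ x : K, x ^ q ^ o = x ^ (ringChar F) ^ ((k : ℕ) * o) := by
    intro x; rw [pow_mul, ← hqr]
  have hfix : ∀ y ∈ F⟮z⟯, y ^ q ^ o = y := by
    intro y hy
    induction hy using IntermediateField.adjoin_induction with
    | mem x hx => rw [Set.mem_singleton_iff.mp hx]; exact hzo
    | algebraMap x => rw [← map_pow, FiniteField.pow_card_pow]
    | add x y _ _ hx hy => rw [hpowsplit, add_pow_char_pow, ← hpowsplit, ← hpowsplit, hx, hy]
    | inv x _ hx => rw [inv_pow, hx]
    | mul x y _ _ hx hy => rw [mul_pow, hx, hy]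
  -- injection into roots of X ^ q ^ o - X
  set g : K[X] := X ^ q ^ o - X with hgdef
  have hgne : g ≠ 0 := FiniteField.X_pow_card_pow_sub_X_ne_zero K hopos.ne' hq
  have hgdeg : g.natDegree = q ^ o := FiniteField.X_pow_card_pow_sub_X_natDegree_eq K hopos.ne' hq
  have hle : q ^ d ≤ q ^ o := by
    have hinj : Set.InjOn (fun y : F⟮z⟯ => (y : K)) (Finset.univ : Finset F⟮z⟯) := by
      intro a _ b _ h; exact Subtype.ext h
    have hmaps : ∀ y : F⟮z⟯, y ∈ (Finset.univ : Finset F⟮z⟯) → (y : K) ∈ g.roots.toFinset := by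
      intro y _
      rw [Multiset.mem_toFinset, mem_roots hgne]
      simp only [hgdef, IsRoot, eval_sub, eval_pow, eval_X]
      rw [hfix (y : K) y.2, sub_self]
    calc q ^ d = Fintype.card F⟮z⟯ := hcard.symm
    _ = (Finset.univ : Finset F⟮z⟯).card := (Finset.card_univ).symm
    _ ≤ g.roots.toFinset.card := Finset.card_le_card_of_injOn _ hmaps hinj
    _ ≤ Multiset.card g.roots := Multiset.toFinset_card_le _
    _ ≤ g.natDegree := card_roots' g
    _ = q ^ o := hgdeg
  have hdo : d ≤ o := (Nat.pow_le_pow_iff_right hq).mp hle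
  exact le_antisymm hdo (Nat.le_of_dvd hdpos ho_dvd_d)

lemma natDegree_factor_cyclotomic {F : Type*} [Field F] [Fintype F] [DecidableEq F]
    (n : ℕ) (hn : 0 < n) (hne : (n : F) ≠ 0) {P : F[X]}
    (hP : P ∈ normalizedFactors (cyclotomic n F)) :
    P.natDegree = orderOf ((Fintype.card F : ZMod n)) := by
  have hirr : Irreducible P := irreducible_of_normalized_factor P hP
  have hPmonic : P.Monic := by
    rw [← normalize_normalized_factor P hP]
    exact monic_normalize hirr.ne_zero
  have hdvd : P ∣ cyclotomic n F := dvd_of_mem_normalizedFactors hP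
  set K := AlgebraicClosure F
  have hdegP : P.degree ≠ 0 := by
    intro h
    exact hirr.not_isUnit (Polynomial.isUnit_iff_degree_eq_zero.mpr h)
  obtain ⟨z, hz⟩ := IsAlgClosed.exists_aeval_eq_zero K P hdegP
  haveI : NeZero (n : K) := by
    refine ⟨fun h => hne ?_⟩
    have : algebraMap F K (n : F) = 0 := by push_cast [h]; simp
    exact (map_eq_zero_iff _ (algebraMap F K).injective).mp this
  have hzc : IsRoot (cyclotomic n K) z := by
    have h1 : (aeval z) (cyclotomic n F) = 0 := by
      obtain ⟨c, hc⟩ := hdvd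
      rw [hc, map_mul, hz, zero_mul]
    rwa [aeval_def, ← eval_map, map_cyclotomic] at h1
  have hprim : IsPrimitiveRoot z n := isRoot_cyclotomic_iff.mp hzc
  have horder : orderOf z = n := hprim.eq_orderOf.symm
  have hfin : IsOfFinOrder z :=
    isOfFinOrder_iff_pow_eq_one.mpr ⟨n, hn, hprim.pow_eq_one⟩
  have hint : IsIntegral F z := ⟨P, hPmonic, by rwa [← aeval_def] ⟩
  have hmin : minpoly F z = P := (minpoly.eq_of_irreducible_of_monic hirr hz hPmonic).symm
  rw [← hmin, minpoly_deg_eq z hfin hint, horder]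

lemma card_factors_cyclotomic {F : Type*} [Field F] [Fintype F] [DecidableEq F]
    (n : ℕ) (hn : 0 < n) (hne : (n : F) ≠ 0) :
    Multiset.card (normalizedFactors (cyclotomic n F))
      * orderOf ((Fintype.card F : ZMod n)) = Nat.totient n := by
  set Φ := cyclotomic n F with hΦ
  have hΦ0 : Φ ≠ 0 := cyclotomic_ne_zero n F
  have hassoc := prod_normalizedFactors hΦ0
  have hmonicfactors : ∀ P ∈ normalizedFactors Φ, Monic P := by
    intro P hP
    rw [← normalize_normalized_factor P hP]
    exact monic_normalize (irreducible_of_normalized_factor P hP).ne_zero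
  have hprodmonic : (normalizedFactors Φ).prod.Monic := by
    have := monic_multiset_prod_of_monic (normalizedFactors Φ) id
      (fun P hP => hmonicfactors P hP)
    simpa using this
  have hprodeq : (normalizedFactors Φ).prod = Φ :=
    eq_of_monic_of_associated hprodmonic (cyclotomic.monic n F) hassoc
  have hdeg : Φ.natDegree = Nat.totient n := natDegree_cyclotomic n F
  have hzero : (0 : F[X]) ∉ normalizedFactors Φ := fun h =>
    (irreducible_of_normalized_factor _ h).ne_zero rfl
  have h2 : Φ.natDegree = Multiset.card (normalizedFactors Φ)
      * orderOf ((Fintype.card F : ZMod n)) := by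
    conv_lhs => rw [← hprodeq]
    rw [natDegree_multiset_prod _ hzero,
      Multiset.map_congr rfl (fun P hP => natDegree_factor_cyclotomic n hn hne hP)]
    simp [Multiset.map_const', Multiset.sum_replicate, smul_eq_mul]
    exact Or.inl rfl
  rw [← h2, hdeg]

lemma order_mod_pp {p q ρ β : ℕ} (hp : p.Prime) (hodd : Odd p) (hq : 2 ≤ q) (hpq : ¬ p ∣ q)
    (hρ : ρ = orderOf ((q : ZMod p))) (hβ : β = padicValNat p (q ^ ρ - 1))
    (i : ℕ) (hi : 1 ≤ i) :
    orderOf ((q : ZMod (p ^ i))) = ρ * p ^ (i - β) := by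
  haveI : Fact p.Prime := ⟨hp⟩
  haveI : NeZero p := ⟨hp.pos.ne'⟩
  haveI : NeZero (p ^ i) := ⟨(pow_pos hp.pos i).ne'⟩
  have hq1 : ∀ e : ℕ, e ≠ 0 → 1 < q ^ e := fun e he => Nat.one_lt_pow he (by omega)
  have hρpos : 0 < ρ := by
    have hne : (q : ZMod p) ≠ 0 := by
      rw [Ne, ZMod.natCast_eq_zero_iff]; exact hpq
    have h1 : (q : ZMod p) ^ (p - 1) = 1 := ZMod.pow_card_sub_one_eq_one hne
    have : IsOfFinOrder ((q : ZMod p)) :=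
      isOfFinOrder_iff_pow_eq_one.mpr ⟨p - 1, by have := hp.two_le; omega, h1⟩
    rw [hρ]; exact this.orderOf_pos
  have hpdvd : p ∣ q ^ ρ - 1 := by
    have := pow_orderOf_eq_one ((q : ZMod p))
    rw [← hρ] at this
    exact ((zmod_pow_eq_one_iff q p ρ hq).mp this)
  have hsub0 : ∀ e : ℕ, e ≠ 0 → q ^ e - 1 ≠ 0 := fun e he => by
    have := hq1 e he; omega
  have hβpos : 1 ≤ β := by
    rw [hβ]
    have := (padicValNat_dvd_iff (p := p) 1 (q ^ ρ - 1)).mp (by simpa using hpdvd)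
    rcases this with h | h
    · exact absurd h (hsub0 ρ hρpos.ne')
    · exact h
  -- LTE
  have hLTE : ∀ s : ℕ, s ≠ 0 → padicValNat p (q ^ (ρ * s) - 1) = β + padicValNat p s := by
    intro s hs
    have h1 : 1 < q ^ ρ := hq1 ρ hρpos.ne'
    have h2 : ¬ p ∣ q ^ ρ := fun h => hpq (hp.dvd_of_dvd_pow h)
    have := padicValNat.pow_sub_pow (p := p) hodd (y := 1) (x := q ^ ρ) h1
      (by simpa using hpdvd) h2 (n := s) hs
    rw [one_pow, ← pow_mul] at this
    rw [this, hβ]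
  -- divisibility characterization
  have hdvd_iff : ∀ e : ℕ, e ≠ 0 → (p ^ i ∣ q ^ e - 1 ↔ i ≤ padicValNat p (q ^ e - 1)) := by
    intro e he
    rw [padicValNat_dvd_iff]
    simp [hsub0 e he]
  set x : ZMod (p ^ i) := (q : ZMod (p ^ i)) with hx
  have hA : x ^ (ρ * p ^ (i - β)) = 1 := by
    have hne1 : ρ * p ^ (i - β) ≠ 0 := Nat.mul_ne_zero hρpos.ne' (pow_ne_zero _ hp.pos.ne')
    rw [hx, zmod_pow_eq_one_iff q (p ^ i) _ hq]
    rw [hdvd_iff _ hne1]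
    rw [hLTE _ (pow_ne_zero _ hp.pos.ne'), padicValNat.prime_pow]
    omega
  have hApos : 0 < ρ * p ^ (i - β) := Nat.mul_pos hρpos (pow_pos hp.pos _)
  have hB : ∀ e : ℕ, 0 < e → x ^ e = 1 → ρ * p ^ (i - β) ∣ e := by
    intro e he hxe
    rw [hx, zmod_pow_eq_one_iff q (p ^ i) _ hq] at hxe
    have hpe : p ∣ q ^ e - 1 := dvd_trans (dvd_pow_self p (by omega : i ≠ 0)) hxe
    have hρe : ρ ∣ e := by
      rw [hρ]
      apply orderOf_dvd_of_pow_eq_one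
      rw [zmod_pow_eq_one_iff q p e hq]
      exact hpe
    obtain ⟨s, hse⟩ := hρe
    have hs0 : s ≠ 0 := by rintro rfl; omega
    have hval : i ≤ β + padicValNat p s := by
      rw [← hLTE s hs0, ← hse]
      exact (hdvd_iff e he.ne').mp hxe
    have : p ^ (i - β) ∣ s := by
      rw [padicValNat_dvd_iff]
      right; omega
    obtain ⟨t, hst⟩ := this
    exact ⟨t, by rw [hse, hst]; ring⟩
  have hfin : IsOfFinOrder x := isOfFinOrder_iff_pow_eq_one.mpr ⟨_, hApos, hA⟩
  exact Nat.dvd_antisymm (orderOf_dvd_of_pow_eq_one hA)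
    (hB _ hfin.orderOf_pos (pow_orderOf_eq_one x))

lemma normalizedFactors_finset_prod {ι F : Type*} [Field F] [DecidableEq F]
    (s : Finset ι) (f : ι → F[X]) (hf : ∀ i ∈ s, f i ≠ 0) :
    normalizedFactors (∏ i ∈ s, f i) = ∑ i ∈ s, normalizedFactors (f i) := by
  classical
  induction s using Finset.induction_on with
  | empty => simp
  | insert _ _ hmem ih =>
    rename_i a s'
    rw [Finset.prod_insert hmem, Finset.sum_insert hmem,
      UniqueFactorizationMonoid.normalizedFactors_mul (hf a (Finset.mem_insert_self a s'))
        (Finset.prod_ne_zero_iff.mpr (fun i hi => hf i (Finset.mem_insert_of_mem hi))),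
      ih (fun i hi => hf i (Finset.mem_insert_of_mem hi))]

lemma card_filter_finset_sum {ι γ : Type*} [DecidableEq γ]
    (s : Finset ι) (m : ι → Multiset γ) (pr : γ → Prop) [DecidablePred pr] :
    Multiset.card ((∑ i ∈ s, m i).filter pr) = ∑ i ∈ s, Multiset.card ((m i).filter pr) := by
  classical
  induction s using Finset.induction_on with
  | empty => simp
  | insert _ _ hmem ih =>
    rename_i a s'
    rw [Finset.sum_insert hmem, Finset.sum_insert hmem, Multiset.filter_add,
      Multiset.card_add, ih]

theorem stmt_13 {F : Type*} [Field F] [Fintype F] [DecidableEq F]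
    (p α : ℕ) (hp : p.Prime) (hodd : Odd p)
    (hpq : ¬ p ∣ Fintype.card F) (ρ β : ℕ)
    (hρ : ρ = orderOf ((Fintype.card F : ZMod p)))
    (hβ : β = padicValNat p ((Fintype.card F) ^ ρ - 1)) :
    ∀ j : ℕ, 1 ≤ j → j ≤ α - β →
      Multiset.card ((normalizedFactors (X ^ (p ^ α) - 1 : F[X])).filter
          (fun P => P.natDegree = ρ * p ^ j))
        = (p ^ β - p ^ (β - 1)) / ρ := by
  intro j hj1 hj2
  haveI : Fact p.Prime := ⟨hp⟩
  set q := Fintype.card F with hqdef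
  have hq : 2 ≤ q := Fintype.one_lt_card
  -- basic facts about ρ and β
  have hρpos : 0 < ρ := by
    have hne : (q : ZMod p) ≠ 0 := by
      rw [Ne, ZMod.natCast_eq_zero_iff]; exact hpq
    have h1 : (q : ZMod p) ^ (p - 1) = 1 := ZMod.pow_card_sub_one_eq_one hne
    have : IsOfFinOrder ((q : ZMod p)) :=
      isOfFinOrder_iff_pow_eq_one.mpr ⟨p - 1, by have := hp.two_le; omega, h1⟩
    rw [hρ]; exact this.orderOf_pos
  have hρdvd : ρ ∣ p - 1 := by
    have hne : (q : ZMod p) ≠ 0 := by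
      rw [Ne, ZMod.natCast_eq_zero_iff]; exact hpq
    rw [hρ]
    exact orderOf_dvd_of_pow_eq_one (ZMod.pow_card_sub_one_eq_one hne)
  have hqρ : 1 < q ^ ρ := Nat.one_lt_pow hρpos.ne' (by omega)
  have hpdvd : p ∣ q ^ ρ - 1 := by
    have := pow_orderOf_eq_one ((q : ZMod p))
    rw [← hρ] at this
    exact (zmod_pow_eq_one_iff q p ρ hq).mp this
  have hβpos : 1 ≤ β := by
    rw [hβ]
    rcases (padicValNat_dvd_iff (p := p) 1 (q ^ ρ - 1)).mp (by simpa using hpdvd) with h | h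
    · omega
    · exact h
  have hβjα : β + j ≤ α := by omega
  -- characteristic facts
  have hpF : (p : F) ≠ 0 := by
    intro h
    obtain ⟨k, hrprime, hqr⟩ := FiniteField.card F (ringChar F)
    have hrp : ringChar F ∣ p := (CharP.cast_eq_zero_iff F (ringChar F) p).mp h
    have : ringChar F = p := (Nat.prime_dvd_prime_iff_eq hrprime hp).mp hrp
    apply hpq
    rw [hqdef, hqr, ← this]
    exact dvd_pow_self _ k.pos.ne'
  have hpiF : ∀ i : ℕ, ((p ^ i : ℕ) : F) ≠ 0 := by
    intro i
    push_cast
    exact pow_ne_zero i hpF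
  -- factorization of X^(p^α) - 1 into cyclotomics
  have hfactor : (X ^ (p ^ α) - 1 : F[X]) =
      ∏ i ∈ Finset.range (α + 1), cyclotomic (p ^ i) F := by
    rw [← prod_cyclotomic_eq_X_pow_sub_one (pow_pos hp.pos α) F,
      Nat.divisors_prime_pow hp, Finset.prod_map]
    rfl
  have hnf : normalizedFactors (X ^ (p ^ α) - 1 : F[X]) =
      ∑ i ∈ Finset.range (α + 1), normalizedFactors (cyclotomic (p ^ i) F) := by
    rw [hfactor]
    exact normalizedFactors_finset_prod _ _ (fun i _ => cyclotomic_ne_zero (p ^ i) F)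
  rw [hnf, card_filter_finset_sum]
  -- the order of q mod p^i
  have horder : ∀ i : ℕ, 1 ≤ i →
      orderOf ((q : ZMod (p ^ i))) = ρ * p ^ (i - β) :=
    fun i hi => order_mod_pp hp hodd hq hpq hρ hβ i hi
  have hD1 : ρ * p ^ j ≠ 1 := by
    intro h
    have h2 : p ^ j = 1 := Nat.eq_one_of_mul_eq_one_left h
    have := Nat.one_lt_pow (by omega : j ≠ 0) hp.one_lt
    omega
  -- sum has a single nonzero term at i = β + j
  rw [Finset.sum_eq_single_of_mem (β + j) (Finset.mem_range.mpr (by omega))]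
  · -- the main term
    have hall : ∀ P ∈ normalizedFactors (cyclotomic (p ^ (β + j)) F),
        P.natDegree = ρ * p ^ j := by
      intro P hP
      rw [natDegree_factor_cyclotomic _ (pow_pos hp.pos _) (hpiF _) hP,
        horder (β + j) (by omega)]
      congr 2
      omega
    rw [Multiset.filter_eq_self.mpr hall]
    have hcount := card_factors_cyclotomic (F := F) (p ^ (β + j))
      (pow_pos hp.pos _) (hpiF _)
    rw [horder (β + j) (by omega), (by omega : β + j - β = j)] at hcount
    -- arithmetic
    obtain ⟨t, ht⟩ := hρdvd
    have htot : (p ^ (β + j)).totient = p ^ (β + j - 1) * (p - 1) :=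
      Nat.totient_prime_pow hp (by omega)
    have hppow : p ^ (β + j - 1) = p ^ (β - 1) * p ^ j := by
      rw [← pow_add]
      congr 1
      omega
    have hcount2 : Multiset.card (normalizedFactors (cyclotomic (p ^ (β + j)) F))
        * (ρ * p ^ j) = (p ^ (β - 1) * t) * (ρ * p ^ j) := by
      rw [hcount, htot, hppow, ht]
      ring
    have hceq := Nat.eq_of_mul_eq_mul_right
      (Nat.mul_pos hρpos (pow_pos hp.pos _)) hcount2
    have hsub : p ^ β - p ^ (β - 1) = ρ * (p ^ (β - 1) * t) := by
      have h1 : p ^ (β - 1) * (p - 1) = p ^ β - p ^ (β - 1) := by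
        rw [Nat.mul_sub, mul_one, ← pow_succ]
        congr 2
        omega
      rw [← h1, ht]
      ring
    rw [hceq, hsub, Nat.mul_div_cancel_left _ hρpos]
  · -- other terms vanish
    intro i hi hine
    rw [Multiset.filter_eq_nil.mpr, Multiset.card_zero]
    intro P hP
    rw [natDegree_factor_cyclotomic _ (pow_pos hp.pos _) (hpiF _) hP]
    rcases Nat.eq_zero_or_pos i with rfl | hipos
    · -- i = 0 : order is 1
      have : ((q : ZMod (p ^ 0))) = 1 := by
        have : (p : ℕ) ^ 0 = 1 := pow_zero p
        exact Subsingleton.elim (α := ZMod 1) _ _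
      rw [this, orderOf_one]
      exact fun h => hD1 h.symm
    · rw [horder i hipos]
      intro h
      have h2 : p ^ (i - β) = p ^ j := Nat.eq_of_mul_eq_mul_left hρpos h
      have h3 : i - β = j := Nat.pow_right_injective hp.two_le h2
      omega
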